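/- For every real x > 0 and every real t, one has 0 < ϑ₃(π/2, ix) ≤ ϑ₃(t, ix) ≤ ϑ₃(0, ix), where ϑ₃(z, ix) = Σ_{n∈ℤ} e^{-πxn²} e^{2inz}. -/

import Mathlib

open Real

section ThetaAux

lemma summable_of_geom_bound {f : ℕ → ℝ} {q C : ℝ} (hq0 : 0 ≤ q) (hq1 : q < 1)
    (h : ∀ n, |f n| ≤ C * q ^ n) : Summable f := by
  apply Summable.of_norm_bounded (g := fun n => C * q ^ n)
    ((summable_geometric_of_lt_one hq0 hq1).mul_left C)
  simpa using h

lemma abs_sin_nat_mul_le (ε : ℝ) : ∀ m : ℕ, |Real.sin (m * ε)| ≤ m * |Real.sin ε| := by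
  intro m
  induction m with
  | zero => simp
  | succ k ih =>
    have h1 : ((k:ℝ)+1) * ε = k * ε + ε := by ring
    push_cast
    rw [h1, Real.sin_add]
    calc |Real.sin (k*ε) * Real.cos ε + Real.cos (k*ε) * Real.sin ε|
        ≤ |Real.sin (k*ε) * Real.cos ε| + |Real.cos (k*ε) * Real.sin ε| := abs_add_le _ _
      _ ≤ |Real.sin (k*ε)| * 1 + 1 * |Real.sin ε| := by
          rw [abs_mul, abs_mul]
          gcongr
          · exact Real.abs_cos_le_one _
          · exact Real.abs_cos_le_one _
      _ ≤ (k:ℝ) * |Real.sin ε| + 1 * |Real.sin ε| := by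
          rw [mul_one]; gcongr
      _ = ((k:ℝ)+1) * |Real.sin ε| := by ring

lemma sq_le_four_pow (m : ℕ) : (m:ℝ)^2 ≤ 4 ^ m := by
  have h : (m:ℝ) ≤ 2 ^ m := by exact_mod_cast (Nat.lt_two_pow_self (n := m)).le
  calc (m:ℝ)^2 ≤ ((2:ℝ)^m)^2 := by gcongr
    _ = 4 ^ m := by rw [← pow_mul, mul_comm, pow_mul]; norm_num

lemma one_add_sq_half_le_cosh (y : ℝ) (hy : 0 ≤ y) : 1 + y^2/2 ≤ Real.cosh y := by
  have h1 : Real.cosh y = 1 + 2 * Real.sinh (y/2)^2 := by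
    rw [show y = 2*(y/2) by ring, Real.cosh_two_mul, Real.cosh_sq]
    ring_nf
  have h2 : y/2 ≤ Real.sinh (y/2) := Real.self_le_sinh_iff.mpr (by linarith)
  nlinarith [Real.sinh_nonneg_iff.mpr (by linarith : (0:ℝ) ≤ y/2)]

lemma exp_le_cosh_key {c d w : ℝ} (hc : 6 ≤ c) (hd : 1/2 ≤ d) (hw : |w| ≤ 1/2) :
    Real.exp (c * w^2) ≤ Real.cosh (2*c*d*w) := by
  have hc0 : (0:ℝ) < c := by linarith
  have hd0 : (0:ℝ) < d := by linarith
  have hu0 : 0 ≤ |w| := abs_nonneg w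
  have hw2 : w^2 = |w|^2 := (sq_abs w).symm
  have hcosh : Real.cosh (2*c*d*w) = Real.cosh (2*c*d*|w|) := by
    rcases abs_cases w with ⟨h, _⟩ | ⟨h, _⟩
    · rw [h]
    · rw [h, show 2*c*d*(-w) = -(2*c*d*w) by ring, Real.cosh_neg]
  set u := |w| with hu
  have hcdu0 : (0:ℝ) ≤ 2*c*d*u := by positivity
  rw [hw2, hcosh]
  rcases le_or_gt (c * u^2) (1/2) with hcase | hcase
  · -- small branch
    have h1 : Real.exp (c*u^2) ≤ (1 - c*u^2)⁻¹ := by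
      have hpos : 0 < 1 - c*u^2 := by linarith
      have := Real.add_one_le_exp (-(c*u^2))
      rw [Real.exp_neg] at this
      rw [← inv_inv (Real.exp (c*u^2))]
      exact inv_anti₀ hpos (by linarith)
    have h2 : (1 - c*u^2)⁻¹ ≤ 1 + 2*(c*u^2) := by
      rw [inv_le_iff_one_le_mul₀ (by linarith)]
      have h3 : 0 ≤ c * u^2 := by positivity
      nlinarith
    have h3 : 1 + 2*(c*u^2) ≤ 1 + (c*u)^2/2 := by nlinarith [sq_nonneg u]
    have h4 : 1 + (c*u)^2/2 ≤ Real.cosh (c*u) := one_add_sq_half_le_cosh _ (by positivity)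
    have h5 : Real.cosh (c*u) ≤ Real.cosh (2*c*d*u) := by
      rw [Real.cosh_le_cosh, abs_of_nonneg (by positivity : (0:ℝ) ≤ c*u), abs_of_nonneg hcdu0]
      nlinarith [mul_nonneg (mul_nonneg hc0.le hu0) (by linarith : (0:ℝ) ≤ 2*d - 1)]
    linarith
  · -- large branch
    have hcu : Real.sqrt 3 ≤ c * u := by
      rw [show c*u = Real.sqrt ((c*u)^2) from (Real.sqrt_sq (by positivity)).symm]
      apply Real.sqrt_le_sqrt
      nlinarith
    have hs3 : (1.7:ℝ) ≤ Real.sqrt 3 := by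
      nlinarith [Real.sq_sqrt (by norm_num : (0:ℝ) ≤ 3), Real.sqrt_nonneg (3:ℝ)]
    have hlog : Real.log 2 + c*u^2 ≤ 2*c*d*u := by
      have hl2 : Real.log 2 < 0.6931471808 := Real.log_two_lt_d9
      nlinarith [mul_nonneg (by nlinarith : (0:ℝ) ≤ c*u) (by nlinarith [hw] : (0:ℝ) ≤ 2*d - u - 1/2)]
    have hstep : Real.exp (c*u^2) ≤ Real.exp (2*c*d*u) / 2 := by
      rw [show Real.exp (2*c*d*u)/2 = Real.exp (2*c*d*u - Real.log 2) by
        rw [Real.exp_sub, Real.exp_log]; norm_num]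
      exact Real.exp_le_exp.mpr (by linarith)
    calc Real.exp (c*u^2) ≤ Real.exp (2*c*d*u)/2 := hstep
      _ ≤ Real.cosh (2*c*d*u) := by
          rw [Real.cosh_eq]
          have := (Real.exp_pos (-(2*c*d*u))).le
          linarith

lemma pair_ineq {c d w : ℝ} (hc : 6 ≤ c) (hd : 1/2 ≤ d) (hw : |w| ≤ 1/2) :
    2 * Real.exp (-c * d^2) ≤ Real.exp (-c * (d-w)^2) + Real.exp (-c * (d+w)^2) := by
  have e1 : -c*(d-w)^2 = (-c*(d^2+w^2)) + (2*c*d*w) := by ring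
  have e2 : -c*(d+w)^2 = (-c*(d^2+w^2)) + (-(2*c*d*w)) := by ring
  have e3 : -c*d^2 = (-c*(d^2+w^2)) + c*w^2 := by ring
  rw [e1, e2, e3, Real.exp_add, Real.exp_add, Real.exp_add, ← mul_add, mul_comm (2:ℝ) _,
    mul_assoc]
  apply mul_le_mul_of_nonneg_left _ (Real.exp_pos _).le
  have := exp_le_cosh_key hc hd hw
  rw [Real.cosh_eq] at this
  linarith

lemma summable_gauss_nat {c : ℝ} (hc : 0 < c) (s : ℝ) :
    Summable (fun n : ℕ => Real.exp (-c * ((n:ℝ) - s)^2)) := by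
  apply summable_of_geom_bound (q := Real.exp (-(c/2))) (C := Real.exp (c * s^2))
    (Real.exp_pos _).le
  · exact Real.exp_lt_one_iff.mpr (by linarith)
  · intro n
    rw [abs_of_pos (Real.exp_pos _), ← Real.exp_nat_mul, ← Real.exp_add]
    apply Real.exp_le_exp.mpr
    have h1 : (n:ℝ) ≤ (n:ℝ)^2 := by
      have : (n:ℝ) ≥ 1 ∨ (n:ℝ) = 0 := by
        rcases Nat.eq_zero_or_pos n with h | h
        · right; simp [h]
        · left; exact_mod_cast h
      rcases this with h | h
      · nlinarith
      · simp [h]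
    nlinarith [sq_nonneg ((n:ℝ) - 2*s)]

lemma summable_gauss_int {c : ℝ} (hc : 0 < c) (s : ℝ) :
    Summable (fun n : ℤ => Real.exp (-c * ((n:ℝ) - s)^2)) := by
  apply Summable.of_nat_of_neg_add_one
  · exact (summable_gauss_nat hc s).congr (by intro n; norm_num)
  · have := summable_gauss_nat hc (-(1+s))
    apply this.congr
    intro n
    congr 1
    push_cast
    ring

noncomputable def gaussP (c s : ℝ) : ℝ := ∑' n : ℤ, Real.exp (-c * ((n:ℝ) - s)^2)

lemma gaussP_shift (c s : ℝ) (m : ℤ) : gaussP c (s + m) = gaussP c s := by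
  unfold gaussP
  rw [← (Equiv.addRight m).tsum_eq (fun n : ℤ => Real.exp (-c * ((n:ℝ) - (s + m))^2))]
  congr 1
  funext n
  simp only [Equiv.coe_addRight]
  congr 1
  push_cast
  ring

lemma gaussP_neg (c s : ℝ) : gaussP c (-s) = gaussP c s := by
  unfold gaussP
  rw [← (Equiv.neg ℤ).tsum_eq (fun n : ℤ => Real.exp (-c * ((n:ℝ) - (-s))^2))]
  congr 1
  funext n
  simp only [Equiv.neg_apply]
  congr 1
  push_cast
  ring

lemma gaussP_pairs {c : ℝ} (hc : 0 < c) (u : ℝ) :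
    gaussP c u = ∑' k : ℕ,
      (Real.exp (-c * ((k:ℝ) - u)^2) + Real.exp (-c * ((k:ℝ) + 1 + u)^2)) := by
  unfold gaussP
  have h1 : Summable (fun k : ℕ => Real.exp (-c * ((k:ℝ) - u)^2)) := summable_gauss_nat hc u
  have h2 : Summable (fun k : ℕ => Real.exp (-c * ((k:ℝ) + 1 + u)^2)) := by
    apply (summable_gauss_nat hc (-(1+u))).congr
    intro n; congr 1; ring
  rw [tsum_of_nat_of_neg_add_one (h1.congr (by intro n; norm_num))
    (by
      apply h2.congr
      intro n; congr 1; push_cast; ring)]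
  have A : ∑' (n : ℕ), Real.exp (-c * (((n:ℤ):ℝ) - u) ^ 2)
      = ∑' k:ℕ, Real.exp (-c*((k:ℝ)-u)^2) := tsum_congr (fun n => by norm_num)
  have B : ∑' (n : ℕ), Real.exp (-c * ((((-((n:ℤ)+1) : ℤ)):ℝ) - u) ^ 2)
      = ∑' k:ℕ, Real.exp (-c*((k:ℝ)+1+u)^2) := tsum_congr (fun n => by congr 1; push_cast; ring)
  rw [A, B, ← Summable.tsum_add h1 h2]

lemma gaussP_min {c : ℝ} (hc : 6 ≤ c) (s : ℝ) : gaussP c (1/2) ≤ gaussP c s := by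
  have hc0 : (0:ℝ) < c := by linarith
  -- reduce s to u ∈ [-1, 0]
  have key : ∀ u : ℝ, -1 ≤ u → u ≤ 0 → gaussP c (-(1/2)) ≤ gaussP c u := by
    intro u hu1 hu0
    rw [gaussP_pairs hc0, gaussP_pairs hc0]
    have h1 : Summable (fun k : ℕ => Real.exp (-c * ((k:ℝ) - u)^2)) := summable_gauss_nat hc0 u
    have h2 : Summable (fun k : ℕ => Real.exp (-c * ((k:ℝ) + 1 + u)^2)) := by
      apply (summable_gauss_nat hc0 (-(1+u))).congr
      intro n; congr 1; ring
    have h3 : Summable (fun k : ℕ => Real.exp (-c * ((k:ℝ) - (-(1/2):ℝ))^2)) :=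
      summable_gauss_nat hc0 _
    have h4 : Summable (fun k : ℕ => Real.exp (-c * ((k:ℝ) + 1 + (-(1/2):ℝ))^2)) := by
      apply (summable_gauss_nat hc0 (-(1/2))).congr
      intro n; congr 1; ring
    apply Summable.tsum_le_tsum _ (h3.add h4) (h1.add h2)
    intro k
    have hd : (1:ℝ)/2 ≤ (k:ℝ) + 1/2 := by have : (0:ℝ) ≤ (k:ℝ) := Nat.cast_nonneg k; linarith
    have hw : |u + 1/2| ≤ 1/2 := by
      rw [abs_le]; constructor <;> linarith
    have := pair_ineq (d := (k:ℝ) + 1/2) (w := u + 1/2) hc hd hw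
    have e0 : ((k:ℝ) - (-(1/2):ℝ)) = (k:ℝ) + 1/2 := by ring
    have e1 : ((k:ℝ) + 1 + (-(1/2):ℝ)) = (k:ℝ) + 1/2 := by ring
    have e2 : ((k:ℝ) - u) = ((k:ℝ) + 1/2) - (u + 1/2) := by ring
    have e3 : ((k:ℝ) + 1 + u) = ((k:ℝ) + 1/2) + (u + 1/2) := by ring
    rw [e0, e1, e2, e3]
    linarith
  have hs : gaussP c s = gaussP c (s - ⌈s⌉) := by
    rw [show s = (s - ⌈s⌉) + (⌈s⌉:ℤ) by push_cast; ring] 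
    rw [gaussP_shift]
    norm_num
  rw [hs, show (1:ℝ)/2 = -(-(1/2)) by ring, gaussP_neg]
  exact key _ (by linarith [Int.ceil_lt_add_one s, Int.le_ceil s]) (by linarith [Int.le_ceil s])

/-- Real-valued theta function ϑ₃(z, ix) = Σ_{n∈ℤ} e^{-πxn²} cos(2nz). -/
noncomputable def theta3R (z x : ℝ) : ℝ :=
  ∑' n : ℤ, Real.exp (-Real.pi * x * (n : ℝ) ^ 2) * Real.cos (2 * (n : ℝ) * z)

lemma summable_theta_term (x : ℝ) (hx : 0 < x) (t : ℝ) :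
    Summable (fun n : ℤ => Real.exp (-Real.pi * x * (n:ℝ)^2) * Real.cos (2 * (n:ℝ) * t)) := by
  apply Summable.of_norm_bounded (g := fun n : ℤ => Real.exp (-(Real.pi * x) * ((n:ℝ) - 0)^2))
    (summable_gauss_int (by positivity) 0)
  intro n
  rw [norm_mul, Real.norm_eq_abs, Real.norm_eq_abs, abs_of_pos (Real.exp_pos _)]
  calc Real.exp (-Real.pi * x * (n:ℝ)^2) * |Real.cos (2*(n:ℝ)*t)|
      ≤ Real.exp (-Real.pi * x * (n:ℝ)^2) * 1 := by
        gcongr; exact Real.abs_cos_le_one _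
    _ = Real.exp (-(Real.pi * x) * ((n:ℝ) - 0)^2) := by rw [mul_one]; congr 1; ring

lemma theta3R_eq_gauss (x : ℝ) (hx : 0 < x) (t : ℝ) :
    theta3R t x = (Real.sqrt x)⁻¹ * gaussP (Real.pi / x) (t / Real.pi) := by
  have hπ : (Real.pi : ℂ) ≠ 0 := Complex.ofReal_ne_zero.mpr Real.pi_ne_zero
  set b : ℂ := Complex.I * (t:ℂ) / (Real.pi:ℂ) with hb
  have hexp : ∀ n : ℤ, (-(Real.pi:ℂ) * (x:ℂ) * (n:ℂ) ^ 2 + 2 * (Real.pi:ℂ) * b * (n:ℂ))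
      = ((-Real.pi * x * (n:ℝ)^2 : ℝ) : ℂ) + ((2 * (n:ℝ) * t : ℝ) : ℂ) * Complex.I := by
    intro n
    rw [hb]
    push_cast
    field_simp
  have hterm : ∀ n : ℤ,
      (Complex.exp (-(Real.pi:ℂ) * (x:ℂ) * (n:ℂ) ^ 2 + 2 * (Real.pi:ℂ) * b * (n:ℂ))).re
      = Real.exp (-Real.pi * x * (n:ℝ)^2) * Real.cos (2 * (n:ℝ) * t) := by
    intro n
    rw [hexp n, Complex.exp_add, ← Complex.ofReal_exp, Complex.re_ofReal_mul,
      Complex.exp_ofReal_mul_I_re]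
  have hsum : Summable (fun n : ℤ =>
      Complex.exp (-(Real.pi:ℂ) * (x:ℂ) * (n:ℂ) ^ 2 + 2 * (Real.pi:ℂ) * b * (n:ℂ))) := by
    apply Summable.of_norm
    have : (fun n : ℤ => ‖Complex.exp (-(Real.pi:ℂ) * (x:ℂ) * (n:ℂ) ^ 2
        + 2 * (Real.pi:ℂ) * b * (n:ℂ))‖)
        = fun n : ℤ => Real.exp (-(Real.pi * x) * ((n:ℝ) - 0)^2) := by
      funext n
      rw [hexp n, Complex.norm_exp]
      congr 1
      simp only [Complex.add_re, Complex.ofReal_re, Complex.mul_re, Complex.I_re,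
        Complex.ofReal_im, Complex.I_im]
      ring
    rw [this]
    exact summable_gauss_int (by positivity) 0
  have h := Complex.tsum_exp_neg_quadratic (a := (x:ℂ))
    (by simpa using hx) b
  -- left side real part
  have hL : theta3R t x = (∑' n : ℤ,
      Complex.exp (-(Real.pi:ℂ) * (x:ℂ) * (n:ℂ) ^ 2 + 2 * (Real.pi:ℂ) * b * (n:ℂ))).re := by
    rw [Complex.re_tsum hsum]
    exact (tsum_congr fun n => (hterm n).symm)
  -- right side
  have hIb : ∀ n : ℤ, ((n:ℂ) + Complex.I * b) = (((n:ℝ) - t / Real.pi : ℝ) : ℂ) := by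
    intro n
    rw [hb]
    push_cast
    rw [show Complex.I * (Complex.I * (t:ℂ) / (Real.pi:ℂ)) =
      (Complex.I * Complex.I) * (t:ℂ) / (Real.pi:ℂ) by ring, Complex.I_mul_I]
    ring
  have hRterm : ∀ n : ℤ, Complex.exp (-(Real.pi:ℂ) / (x:ℂ) * ((n:ℂ) + Complex.I * b) ^ 2)
      = ((Real.exp (-(Real.pi / x) * ((n:ℝ) - t / Real.pi)^2) : ℝ) : ℂ) := by
    intro n
    rw [hIb n, show -(Real.pi:ℂ)/(x:ℂ) * ((((n:ℝ) - t/Real.pi : ℝ)):ℂ)^2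
      = ((-(Real.pi/x) * ((n:ℝ) - t/Real.pi)^2 : ℝ) : ℂ) by push_cast; ring,
      ← Complex.ofReal_exp]
  have hsqrt : (1 : ℂ) / (x:ℂ) ^ (1/2 : ℂ) = ((Real.sqrt x)⁻¹ : ℝ) := by
    rw [show ((1:ℂ)/2) = (((1:ℝ)/2 : ℝ) : ℂ) by norm_num, ← Complex.ofReal_cpow hx.le,
      ← Real.sqrt_eq_rpow]
    push_cast
    rw [one_div]
  rw [hL, h, hsqrt]
  rw [show (∑' n : ℤ, Complex.exp (-(Real.pi:ℂ) / (x:ℂ) * ((n:ℂ) + Complex.I * b) ^ 2))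
      = ((gaussP (Real.pi / x) (t / Real.pi) : ℝ) : ℂ) by
    rw [gaussP, Complex.ofReal_tsum]
    exact tsum_congr fun n => hRterm n]
  rw [← Complex.ofReal_mul, Complex.ofReal_re]

set_option maxHeartbeats 1000000 in
lemma regimeA {x : ℝ} (hx : 1/2 ≤ x) (t : ℝ) : theta3R (Real.pi/2) x ≤ theta3R t x := by
  have hx0 : 0 < x := by linarith
  have hπ3 : (3.141592:ℝ) < Real.pi := Real.pi_gt_d6
  set q : ℝ := Real.exp (-(Real.pi * x)) with hqdef
  have hq0 : 0 < q := Real.exp_pos _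
  have hq4 : q ≤ 1/4 := by
    rw [hqdef, show (1:ℝ)/4 = Real.exp (Real.log (1/4)) from (Real.exp_log (by norm_num)).symm]
    apply Real.exp_le_exp.mpr
    have h4 : Real.log (1/4) = -(2 * Real.log 2) := by
      rw [show (1:ℝ)/4 = ((2:ℝ)^2)⁻¹ by norm_num, Real.log_inv, Real.log_pow]
      push_cast; ring
    rw [h4]
    have := Real.log_two_lt_d9
    nlinarith
  have hq1 : q < 1 := by linarith
  set ε : ℝ := t - Real.pi/2 with hε
  -- the ℕ-indexed difference terms
  set f : ℕ → ℝ := fun m =>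
    Real.exp (-Real.pi * x * (m:ℝ)^2) * ((-1:ℝ)^m * (Real.cos (2*(m:ℝ)*ε) - 1)) with hf
  have hexpq : ∀ m : ℕ, Real.exp (-Real.pi * x * (m:ℝ)^2) = q ^ (m^2) := by
    intro m
    rw [hqdef, ← Real.exp_nat_mul]
    congr 1
    push_cast
    ring
  have hfabs : ∀ m : ℕ, |f m| ≤ 2 * Real.sin ε ^ 2 * ((m:ℝ)^2 * q ^ (m^2)) := by
    intro m
    rw [hf]
    simp only []
    rw [abs_mul, abs_mul, abs_pow, abs_neg, abs_one, one_pow, one_mul,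
      abs_of_pos (Real.exp_pos _), hexpq]
    have h1 : Real.cos (2*(m:ℝ)*ε) - 1 = -(2 * Real.sin ((m:ℝ)*ε)^2) := by
      have h2 := Real.cos_two_mul ((m:ℝ)*ε)
      have h3 := Real.sin_sq_add_cos_sq ((m:ℝ)*ε)
      rw [show 2*(m:ℝ)*ε = 2*((m:ℝ)*ε) by ring, h2]
      nlinarith
    rw [h1, abs_neg, abs_mul, abs_of_nonneg (by norm_num : (0:ℝ) ≤ 2),
      abs_of_nonneg (sq_nonneg _)]
    have h4 : Real.sin ((m:ℝ)*ε)^2 ≤ (m:ℝ)^2 * Real.sin ε ^2 := by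
      have h5 := abs_sin_nat_mul_le ε m
      have h6 : |Real.sin ((m:ℝ)*ε)|^2 ≤ ((m:ℝ) * |Real.sin ε|)^2 := by
        apply pow_le_pow_left₀ (abs_nonneg _) h5
      rw [sq_abs] at h6
      calc Real.sin ((m:ℝ)*ε)^2 ≤ ((m:ℝ) * |Real.sin ε|)^2 := h6
        _ = (m:ℝ)^2 * Real.sin ε^2 := by rw [mul_pow, sq_abs]
    calc q^(m^2) * (2 * Real.sin ((m:ℝ)*ε)^2) ≤ q^(m^2) * (2 * ((m:ℝ)^2 * Real.sin ε^2)) := by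
          gcongr
      _ = 2 * Real.sin ε^2 * ((m:ℝ)^2 * q^(m^2)) := by ring
  have hbound2 : ∀ k : ℕ, |f (k+2)| ≤ (2 * Real.sin ε ^ 2) * (4*q^2) ^ (k+2) := by
    intro k
    refine (hfabs (k+2)).trans ?_
    have h1 : ((k+2:ℕ):ℝ)^2 ≤ 4^(k+2) := sq_le_four_pow (k+2)
    have h2 : q^((k+2)^2) ≤ q^(2*(k+2)) := by
      apply pow_le_pow_of_le_one hq0.le hq1.le
      nlinarith
    have h3 : ((k+2:ℕ):ℝ)^2 * q^((k+2)^2) ≤ 4^(k+2) * q^(2*(k+2)) := by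
      apply mul_le_mul h1 h2 (by positivity) (by positivity)
    calc 2 * Real.sin ε^2 * (((k+2:ℕ):ℝ)^2 * q^((k+2)^2))
        ≤ 2 * Real.sin ε^2 * (4^(k+2) * q^(2*(k+2))) := by gcongr ?_ * ?_
      _ = (2 * Real.sin ε^2) * (4*q^2)^(k+2) := by
          rw [mul_pow, pow_mul]
  have hfsummable : Summable f := by
    apply summable_of_geom_bound hq0.le hq1 (C := 2)
    intro m
    rw [hf]
    simp only []
    rw [abs_mul, abs_mul, abs_pow, abs_neg, abs_one, one_pow, one_mul,
      abs_of_pos (Real.exp_pos _), hexpq]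
    have h1 : |Real.cos (2*(m:ℝ)*ε) - 1| ≤ 2 := by
      rw [abs_le]
      constructor
      · nlinarith [Real.neg_one_le_cos (2*(m:ℝ)*ε)]
      · nlinarith [Real.cos_le_one (2*(m:ℝ)*ε)]
    have h2 : q ^ (m^2) ≤ q ^ m :=
      pow_le_pow_of_le_one hq0.le hq1.le (Nat.le_self_pow (by norm_num) m)
    calc q^(m^2) * |Real.cos (2*(m:ℝ)*ε) - 1| ≤ q^(m^2) * 2 := by gcongr
      _ ≤ q^m * 2 := by gcongr
      _ = 2 * q^m := by ring
  -- ℤ-indexed difference terms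
  set d : ℤ → ℝ := fun n => Real.exp (-Real.pi * x * (n:ℝ)^2) *
      (Real.cos (2*(n:ℝ)*t) - Real.cos (2*(n:ℝ)*(Real.pi/2))) with hd
  have hdnat : ∀ m : ℕ, d (m:ℤ) = f m := by
    intro m
    rw [hd, hf]
    simp only [Int.cast_natCast]
    congr 1
    have e1 : 2*(m:ℝ)*t = 2*(m:ℝ)*ε + ((m:ℤ):ℝ)*Real.pi := by rw [hε]; push_cast; ring
    have e2 : 2*(m:ℝ)*(Real.pi/2) = 0 + ((m:ℤ):ℝ)*Real.pi := by push_cast; ring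
    rw [e1, e2, Real.cos_add_int_mul_pi, Real.cos_add_int_mul_pi, Real.cos_zero,
      zpow_natCast]
    ring
  have hdeven : ∀ n : ℤ, d (-n) = d n := by
    intro n
    rw [hd]
    simp only [Int.cast_neg]
    rw [show 2*(-(n:ℝ))*t = -(2*(n:ℝ)*t) by ring, Real.cos_neg,
      show 2*(-(n:ℝ))*(Real.pi/2) = -(2*(n:ℝ)*(Real.pi/2)) by ring, Real.cos_neg, neg_sq]
  have hsub : theta3R t x - theta3R (Real.pi/2) x = ∑' n:ℤ, d n := by
    rw [theta3R, theta3R,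
      ← Summable.tsum_sub (summable_theta_term x hx0 t) (summable_theta_term x hx0 (Real.pi/2))]
    exact tsum_congr fun n => (mul_sub _ _ _).symm
  have hfs1 : Summable (fun k : ℕ => f (k+1)) := (summable_nat_add_iff 1).mpr hfsummable
  have hfs2 : Summable (fun k : ℕ => f (k+2)) := (summable_nat_add_iff 2).mpr hfsummable
  have hneg : ∀ k : ℕ, d (-((k:ℤ)+1)) = f (k+1) := by
    intro k
    rw [show -((k:ℤ)+1) = -(((k+1:ℕ)):ℤ) by push_cast; ring, hdeven, hdnat]
  have hzd : ∑' n:ℤ, d n = 2 * ∑' k:ℕ, f (k+1) := by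
    rw [tsum_of_nat_of_neg_add_one (hfsummable.congr fun n => (hdnat n).symm)
      (hfs1.congr fun k => (hneg k).symm),
      tsum_congr hdnat, tsum_congr hneg, Summable.tsum_eq_zero_add hfsummable]
    have hf0 : f 0 = 0 := by rw [hf]; simp
    rw [hf0]
    ring
  have hS1 : ∑' k:ℕ, f (k+1) = f 1 + ∑' k:ℕ, f (k+2) := by
    have he : (fun k:ℕ => f (k+1+1)) = fun k:ℕ => f (k+2) :=
      funext fun k => by norm_num [add_assoc]
    rw [Summable.tsum_eq_zero_add hfs1, he]
  -- geometric tail bound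
  have h4q0 : (0:ℝ) ≤ 4*q^2 := by positivity
  have h4q1 : 4*q^2 < 1 := by nlinarith
  have hgeom : Summable (fun k:ℕ => (2*Real.sin ε^2) * (4*q^2)^(k+2)) := by
    apply Summable.mul_left
    exact ((summable_geometric_of_lt_one h4q0 h4q1).comp_injective (add_left_injective 2))
  have habs : Summable (fun k:ℕ => |f (k+2)|) :=
    Summable.of_nonneg_of_le (fun k => abs_nonneg _) hbound2 hgeom
  have hT : |∑' k:ℕ, f (k+2)| ≤ 2*Real.sin ε^2 * (16*q^4) * (1-4*q^2)⁻¹ := by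
    calc |∑' k:ℕ, f (k+2)| ≤ ∑' k:ℕ, |f (k+2)| := by
          rw [← Real.norm_eq_abs]
          exact (norm_tsum_le_tsum_norm (habs.congr fun k => (Real.norm_eq_abs _).symm)).trans
            (le_of_eq (tsum_congr fun k => Real.norm_eq_abs _))
      _ ≤ ∑' k:ℕ, (2*Real.sin ε^2) * (4*q^2)^(k+2) := Summable.tsum_le_tsum hbound2 habs hgeom
      _ = 2*Real.sin ε^2 * (16*q^4) * (1-4*q^2)⁻¹ := by
          rw [show (fun k:ℕ => (2*Real.sin ε^2) * (4*q^2)^(k+2))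
              = fun k:ℕ => ((2*Real.sin ε^2) * (16*q^4)) * (4*q^2)^k by
            funext k
            rw [pow_add]
            ring]
          rw [tsum_mul_left, tsum_geometric_of_lt_one h4q0 h4q1]
  have hf1 : f 1 = 2*q*Real.sin ε^2 := by
    rw [hf]
    simp only []
    have h2ε : Real.cos (2*((1:ℕ):ℝ)*ε) = 1 - 2*Real.sin ε^2 := by
      rw [show 2*((1:ℕ):ℝ)*ε = 2*ε by push_cast; ring, Real.cos_two_mul]
      nlinarith [Real.sin_sq_add_cos_sq ε]
    rw [h2ε, hexpq 1]
    norm_num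
    ring
  have hB : 2*Real.sin ε^2*(16*q^4)*(1-4*q^2)⁻¹ ≤ 2*q*Real.sin ε^2 := by
    have hs : (0:ℝ) ≤ Real.sin ε^2 := sq_nonneg _
    have hinv : (1-4*q^2)⁻¹ ≤ 2 := by
      rw [show (2:ℝ) = ((1:ℝ)/2)⁻¹ by norm_num]
      exact inv_anti₀ (by norm_num) (by nlinarith)
    have h1 : 2*Real.sin ε^2*(16*q^4)*(1-4*q^2)⁻¹ ≤ 2*Real.sin ε^2*(16*q^4)*2 := by
      gcongr
    have h2 : 32*q^3 ≤ 1/2 := by nlinarith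
    nlinarith [mul_nonneg hs hq0.le, mul_nonneg (mul_nonneg hs hq0.le) (by linarith : (0:ℝ) ≤ 1/2 - 32*q^3)]
  have key : (0:ℝ) ≤ ∑' n:ℤ, d n := by
    rw [hzd, hS1, hf1]
    have := (abs_le.mp hT).1
    nlinarith [sq_nonneg (Real.sin ε)]
  linarith [hsub ▸ key]

theorem theta3R_bounds (x : ℝ) (hx : 0 < x) (t : ℝ) :
    0 < theta3R (Real.pi / 2) x ∧ theta3R (Real.pi / 2) x ≤ theta3R t x ∧
      theta3R t x ≤ theta3R 0 x := by
  refine ⟨?_, ?_, ?_⟩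
  · rw [theta3R_eq_gauss x hx (Real.pi/2)]
    apply mul_pos (inv_pos.mpr (Real.sqrt_pos.mpr hx))
    rw [gaussP]
    exact Summable.tsum_pos (summable_gauss_int (by positivity) _)
      (fun n => (Real.exp_pos _).le) 0 (Real.exp_pos _)
  · rcases le_or_gt (1/2 : ℝ) x with h | h
    · exact regimeA h t
    · rw [theta3R_eq_gauss x hx t, theta3R_eq_gauss x hx (Real.pi/2)]
      apply mul_le_mul_of_nonneg_left _ (inv_nonneg.mpr (Real.sqrt_nonneg x))
      have hc : 6 ≤ Real.pi / x := by
        rw [le_div_iff₀ hx]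
        nlinarith [Real.pi_gt_three]
      have hhalf : Real.pi / 2 / Real.pi = 1/2 := by
        field_simp
      rw [hhalf]
      exact gaussP_min hc (t / Real.pi)
  · rw [theta3R, theta3R]
    apply Summable.tsum_le_tsum _ (summable_theta_term x hx t) (summable_theta_term x hx 0)
    intro n
    have h1 : Real.cos (2 * (n:ℝ) * 0) = 1 := by norm_num
    rw [h1, mul_one]
    calc Real.exp (-Real.pi * x * (n:ℝ)^2) * Real.cos (2*(n:ℝ)*t)
        ≤ Real.exp (-Real.pi * x * (n:ℝ)^2) * 1 :=
          mul_le_mul_of_nonneg_left (Real.cos_le_one _) (Real.exp_pos _).le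
      _ = Real.exp (-Real.pi * x * (n:ℝ)^2) := mul_one _

end ThetaAux
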